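/- For any pairwise distinct complex numbers $h_1, h_2, h_3, h_4$, one has $\sum_{1 \leq i < j \leq 4} \frac{(h_i h_j)\left(\sum_{k \neq i,j} h_k\right)^2}{\prod_{k \neq i,j}(h_i - h_k)(h_j - h_k)} = 1$, where each summand's numerator uses the exponent $\delta = 2$. -/

import Mathlib

open Finset

private lemma aux_fano (a b c d : ℂ) (hab : a - b ≠ 0) (hac : a - c ≠ 0) (had : a - d ≠ 0)
    (hbc : b - c ≠ 0) (hbd : b - d ≠ 0) (hcd : c - d ≠ 0) (hba : b - a ≠ 0) (hca : c - a ≠ 0)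
    (hda : d - a ≠ 0) (hcb : c - b ≠ 0) (hdb : d - b ≠ 0) (hdc : d - c ≠ 0) :
    a * b * (c + d) ^ 2 / ((a - c) * (b - c) * ((a - d) * (b - d))) +
            a * c * (b + d) ^ 2 / ((a - b) * (c - b) * ((a - d) * (c - d))) +
          a * d * (b + c) ^ 2 / ((a - b) * (d - b) * ((a - c) * (d - c))) +
        (b * c * (a + d) ^ 2 / ((b - a) * (c - a) * ((b - d) * (c - d))) +
          b * d * (a + c) ^ 2 / ((b - a) * (d - a) * ((b - c) * (d - c)))) +
      c * d * (a + b) ^ 2 / ((c - a) * (d - a) * ((c - b) * (d - b))) = 1 := by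
  set D := (a - b) * (a - c) * (a - d) * (b - c) * (b - d) * (c - d) with hDdef
  have hD : D ≠ 0 := by
    rw [hDdef]
    exact mul_ne_zero (mul_ne_zero (mul_ne_zero (mul_ne_zero (mul_ne_zero hab hac) had) hbc) hbd) hcd
  have e1 : a * b * (c + d) ^ 2 / ((a - c) * (b - c) * ((a - d) * (b - d)))
      = a * b * (c + d) ^ 2 * ((a - b) * (c - d)) / D := by
    rw [div_eq_div_iff (mul_ne_zero (mul_ne_zero hac hbc) (mul_ne_zero had hbd)) hD, hDdef]; ring
  have e2 : a * c * (b + d) ^ 2 / ((a - b) * (c - b) * ((a - d) * (c - d)))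
      = a * c * (b + d) ^ 2 * (-((a - c) * (b - d))) / D := by
    rw [div_eq_div_iff (mul_ne_zero (mul_ne_zero hab hcb) (mul_ne_zero had hcd)) hD, hDdef]; ring
  have e3 : a * d * (b + c) ^ 2 / ((a - b) * (d - b) * ((a - c) * (d - c)))
      = a * d * (b + c) ^ 2 * ((a - d) * (b - c)) / D := by
    rw [div_eq_div_iff (mul_ne_zero (mul_ne_zero hab hdb) (mul_ne_zero hac hdc)) hD, hDdef]; ring
  have e4 : b * c * (a + d) ^ 2 / ((b - a) * (c - a) * ((b - d) * (c - d)))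
      = b * c * (a + d) ^ 2 * ((a - d) * (b - c)) / D := by
    rw [div_eq_div_iff (mul_ne_zero (mul_ne_zero hba hca) (mul_ne_zero hbd hcd)) hD, hDdef]; ring
  have e5 : b * d * (a + c) ^ 2 / ((b - a) * (d - a) * ((b - c) * (d - c)))
      = b * d * (a + c) ^ 2 * (-((a - c) * (b - d))) / D := by
    rw [div_eq_div_iff (mul_ne_zero (mul_ne_zero hba hda) (mul_ne_zero hbc hdc)) hD, hDdef]; ring
  have e6 : c * d * (a + b) ^ 2 / ((c - a) * (d - a) * ((c - b) * (d - b)))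
      = c * d * (a + b) ^ 2 * ((a - b) * (c - d)) / D := by
    rw [div_eq_div_iff (mul_ne_zero (mul_ne_zero hca hda) (mul_ne_zero hcb hdb)) hD, hDdef]; ring
  rw [e1, e2, e3, e4, e5, e6]
  rw [show ∀ x1 x2 x3 x4 x5 x6 : ℂ, x1 / D + x2 / D + x3 / D + (x4 / D + x5 / D) + x6 / D
      = (x1 + x2 + x3 + x4 + x5 + x6) / D from fun _ _ _ _ _ _ => by ring]
  rw [div_eq_one_iff_eq hD, hDdef]
  ring

theorem degree_fano_lines_on_plane_in_P3 (h : Fin 4 → ℂ) (hdist : Function.Injective h) :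
    ∑ i : Fin 4, ∑ j : Fin 4,
      (if i < j then
        (h i * h j) * (∑ k ∈ Finset.univ \ {i, j}, h k) ^ 2 /
          ∏ k ∈ Finset.univ \ {i, j}, ((h i - h k) * (h j - h k))
      else 0) = 1 := by
  have e01 : (univ : Finset (Fin 4)) \ {0, 1} = {2, 3} := by decide
  have e02 : (univ : Finset (Fin 4)) \ {0, 2} = {1, 3} := by decide
  have e03 : (univ : Finset (Fin 4)) \ {0, 3} = {1, 2} := by decide
  have e12 : (univ : Finset (Fin 4)) \ {1, 2} = {0, 3} := by decide
  have e13 : (univ : Finset (Fin 4)) \ {1, 3} = {0, 2} := by decide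
  have e23 : (univ : Finset (Fin 4)) \ {2, 3} = {0, 1} := by decide
  have d01 : h 0 - h 1 ≠ 0 := sub_ne_zero.2 (fun e => by exact absurd (hdist e) (by decide))
  have d02 : h 0 - h 2 ≠ 0 := sub_ne_zero.2 (fun e => by exact absurd (hdist e) (by decide))
  have d03 : h 0 - h 3 ≠ 0 := sub_ne_zero.2 (fun e => by exact absurd (hdist e) (by decide))
  have d12 : h 1 - h 2 ≠ 0 := sub_ne_zero.2 (fun e => by exact absurd (hdist e) (by decide))
  have d13 : h 1 - h 3 ≠ 0 := sub_ne_zero.2 (fun e => by exact absurd (hdist e) (by decide))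
  have d23 : h 2 - h 3 ≠ 0 := sub_ne_zero.2 (fun e => by exact absurd (hdist e) (by decide))
  have d10 : h 1 - h 0 ≠ 0 := fun e => d01 (by linear_combination -e)
  have d20 : h 2 - h 0 ≠ 0 := fun e => d02 (by linear_combination -e)
  have d30 : h 3 - h 0 ≠ 0 := fun e => d03 (by linear_combination -e)
  have d21 : h 2 - h 1 ≠ 0 := fun e => d12 (by linear_combination -e)
  have d31 : h 3 - h 1 ≠ 0 := fun e => d13 (by linear_combination -e)
  have d32 : h 3 - h 2 ≠ 0 := fun e => d23 (by linear_combination -e)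
  simp only [Fin.sum_univ_four]
  norm_num [e01, e02, e03, e12, e13, e23, Finset.sum_pair, Finset.prod_pair,
    (by decide : ¬ (1 : Fin 4) < 0), (by decide : ¬ (2 : Fin 4) < 0),
    (by decide : ¬ (3 : Fin 4) < 0), (by decide : ¬ (2 : Fin 4) < 1),
    (by decide : ¬ (3 : Fin 4) < 1), (by decide : ¬ (3 : Fin 4) < 2),
    (by decide : (0 : Fin 4) < 1), (by decide : (0 : Fin 4) < 2),
    (by decide : (0 : Fin 4) < 3), (by decide : (1 : Fin 4) < 2),
    (by decide : (1 : Fin 4) < 3), (by decide : (2 : Fin 4) < 3),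
    (by decide : (2:Fin 4) ≠ 3), (by decide : (1:Fin 4) ≠ 3), (by decide : (1:Fin 4) ≠ 2),
    (by decide : (0:Fin 4) ≠ 3), (by decide : (0:Fin 4) ≠ 2), (by decide : (0:Fin 4) ≠ 1)]
  exact aux_fano (h 0) (h 1) (h 2) (h 3) d01 d02 d03 d12 d13 d23 d10 d20 d30 d21 d31 d32
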